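/- Suppose d = d₁d₂⋯d_n with d₁ = 2 or d₁ = 3, and d₁ ≤ d_r for all r = 2…n. Then any collection of pairwise mutually unbiased orthonormal product bases of ℂ^{d₁} ⊗ ⋯ ⊗ ℂ^{d_n} contains at most d₁ + 1 bases. -/

import Mathlib

open scoped ComplexInnerProductSpace

/-- The tensor product `ψ¹ ⊗ ⋯ ⊗ ψⁿ` of `n` vectors, realized concretely on
`EuclideanSpace`: its component at the multi-index `f` is `∏ r, ψ r (f r)`. -/
noncomputable def eprodPi {n : ℕ} {D : Fin n → ℕ}
    (ψ : (r : Fin n) → EuclideanSpace ℂ (Fin (D r))) :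
    EuclideanSpace ℂ ((r : Fin n) → Fin (D r)) :=
  WithLp.toLp 2 (fun f => ∏ r, ψ r (f r))

/-- Pairing a head vector with a tail vector. -/
noncomputable def tensorHT {k : ℕ} {E : Fin (k + 1) → ℕ}
    (u : EuclideanSpace ℂ (Fin (E 0)))
    (X : EuclideanSpace ℂ ((r : Fin k) → Fin (E r.succ))) :
    EuclideanSpace ℂ ((r : Fin (k + 1)) → Fin (E r)) :=
  WithLp.toLp 2 (fun f => u (f 0) * X (fun r => f r.succ))

def finConsEquiv {k : ℕ} (E : Fin (k + 1) → Type*) :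
    (E 0 × ((r : Fin k) → E r.succ)) ≃ ((r : Fin (k + 1)) → E r) where
  toFun p := Fin.cons p.1 p.2
  invFun f := (f 0, fun r => f r.succ)
  left_inv p := by
    refine Prod.ext ?_ ?_
    · simp
    · funext r; simp
  right_inv f := by funext r; refine Fin.cases ?_ (fun i => ?_) r <;> simp

lemma inner_tensorHT {k : ℕ} {E : Fin (k + 1) → ℕ}
    (u u' : EuclideanSpace ℂ (Fin (E 0)))
    (X X' : EuclideanSpace ℂ ((r : Fin k) → Fin (E r.succ))) :
    ⟪tensorHT u X, tensorHT u' X'⟫ = ⟪u, u'⟫ * ⟪X, X'⟫ := by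
  classical
  rw [PiLp.inner_apply, PiLp.inner_apply, PiLp.inner_apply]
  simp only [RCLike.inner_apply']
  rw [← Equiv.sum_comp (finConsEquiv (fun r => Fin (E r)))]
  rw [Fintype.sum_prod_type, Finset.sum_mul_sum]
  refine Finset.sum_congr rfl fun a _ => Finset.sum_congr rfl fun g _ => ?_
  simp only [finConsEquiv, Equiv.coe_fn_mk, tensorHT, map_mul]
  rw [Fin.cons_zero]
  have hg : (fun r : Fin k => Fin.cons (α := fun r => Fin (E r)) a g r.succ) = g :=
    funext fun r => Fin.cons_succ (α := fun r => Fin (E r)) a g r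
  rw [hg]
  ring

lemma eprodPi_succ {k : ℕ} {E : Fin (k + 1) → ℕ}
    (x : (r : Fin (k + 1)) → EuclideanSpace ℂ (Fin (E r))) :
    eprodPi x = tensorHT (x 0) (eprodPi (fun r : Fin k => x r.succ)) := by
  ext f
  show (∏ r, x r (f r)) = x 0 (f 0) * ∏ r : Fin k, x r.succ (f r.succ)
  exact Fin.prod_univ_succ _

lemma inner_eprodPi : ∀ {k : ℕ} {E : Fin k → ℕ}
    (x y : (r : Fin k) → EuclideanSpace ℂ (Fin (E r))),
    ⟪eprodPi x, eprodPi y⟫ = ∏ r, ⟪x r, y r⟫ := by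
  intro k
  induction k with
  | zero =>
      intro E x y
      rw [PiLp.inner_apply]
      simp [eprodPi, RCLike.inner_apply']
  | succ k ih =>
      intro E x y
      rw [eprodPi_succ x, eprodPi_succ y, inner_tensorHT, ih, Fin.prod_univ_succ]

section Count

open Submodule FiniteDimensional

/-- `outerE d₁ a` is the matrix `|a⟩⟨a|` regarded as a vector in `ℂ^{d₁ × d₁}`. -/
noncomputable def outerE (d₁ : ℕ) (a : EuclideanSpace ℂ (Fin d₁)) :
    EuclideanSpace ℂ (Fin d₁ × Fin d₁) :=
  WithLp.toLp 2 (fun p => a p.1 * (starRingEnd ℂ) (a p.2))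

/-- The identity matrix regarded as a vector in `ℂ^{d₁ × d₁}`. -/
noncomputable def idE (d₁ : ℕ) : EuclideanSpace ℂ (Fin d₁ × Fin d₁) :=
  WithLp.toLp 2 (fun p => if p.1 = p.2 then 1 else 0)

lemma inner_outerE {d₁ : ℕ} (a c : EuclideanSpace ℂ (Fin d₁)) :
    ⟪outerE d₁ a, outerE d₁ c⟫ = ⟪a, c⟫ * ⟪c, a⟫ := by
  rw [PiLp.inner_apply, PiLp.inner_apply, PiLp.inner_apply]
  simp only [RCLike.inner_apply']
  rw [Fintype.sum_prod_type, Finset.sum_mul_sum]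
  refine Finset.sum_congr rfl fun x _ => Finset.sum_congr rfl fun y _ => ?_
  simp only [outerE, map_mul, RCLike.conj_conj, RingHom.id_apply, RingHomCompTriple.comp_apply]
  ring

lemma inner_outerE_idE {d₁ : ℕ} (a : EuclideanSpace ℂ (Fin d₁)) :
    ⟪outerE d₁ a, idE d₁⟫ = ⟪a, a⟫ := by
  rw [PiLp.inner_apply, PiLp.inner_apply]
  simp only [RCLike.inner_apply']
  rw [Fintype.sum_prod_type]
  have : ∀ x : Fin d₁,
      (∑ y : Fin d₁, (starRingEnd ℂ) (outerE d₁ a (x, y)) * idE d₁ (x, y))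
        = (starRingEnd ℂ) (a x) * a x := by
    intro x
    rw [Finset.sum_eq_single x]
    · simp [outerE, idE, mul_comm]
    · intro y _ hy
      simp [outerE, idE, Ne.symm hy]
    · simp
  rw [Finset.sum_congr rfl fun x _ => this x]

lemma inner_idE_outerE {d₁ : ℕ} (a : EuclideanSpace ℂ (Fin d₁)) :
    ⟪idE d₁, outerE d₁ a⟫ = ⟪a, a⟫ := by
  rw [← inner_conj_symm, inner_outerE_idE, inner_conj_symm]

lemma inner_idE_idE {d₁ : ℕ} : ⟪idE d₁, idE d₁⟫ = (d₁ : ℂ) := by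
  rw [PiLp.inner_apply]
  simp only [RCLike.inner_apply']
  rw [Fintype.sum_prod_type]
  have : ∀ x : Fin d₁,
      (∑ y : Fin d₁, (starRingEnd ℂ) (idE d₁ (x, y)) * idE d₁ (x, y)) = 1 := by
    intro x
    rw [Finset.sum_eq_single x]
    · simp [idE]
    · intro y _ hy
      simp [idE, Ne.symm hy]
    · simp
  rw [Finset.sum_congr rfl fun x _ => this x]
  simp

lemma span_inner_eq_zero {F : Type*} [NormedAddCommGroup F] [InnerProductSpace ℂ F]
    {s t : Set F} (h : ∀ a ∈ s, ∀ c ∈ t, ⟪a, c⟫ = 0) :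
    ∀ x ∈ Submodule.span ℂ s, ∀ y ∈ Submodule.span ℂ t, ⟪x, y⟫ = 0 := by
  intro x hx y hy
  have step1 : ∀ a ∈ s, ⟪a, y⟫ = 0 := by
    intro a ha
    have hle : Submodule.span ℂ t ≤ LinearMap.ker (innerSL ℂ a : _ →ₗ[ℂ] ℂ) :=
      Submodule.span_le.mpr fun c hc => by
        simpa [LinearMap.mem_ker] using h a ha c hc
    simpa [LinearMap.mem_ker] using hle hy
  have step2 : ⟪y, x⟫ = 0 := by
    have hle : Submodule.span ℂ s ≤ LinearMap.ker (innerSL ℂ y : _ →ₗ[ℂ] ℂ) :=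
      Submodule.span_le.mpr fun a ha => by
        have h1 := step1 a ha
        have : ⟪y, a⟫ = 0 := by
          rw [← inner_conj_symm, h1, map_zero]
        simpa [LinearMap.mem_ker] using this
    simpa [LinearMap.mem_ker] using hle hx
  rw [← inner_conj_symm, step2, map_zero]

end Count

set_option maxHeartbeats 1000000 in
lemma count_lemma {m N d₁ Mc : ℕ} (hd : 2 ≤ d₁) (hMc : (Mc : ℂ) ≠ 0)
    (w : Fin m → Fin N → EuclideanSpace ℂ (Fin d₁))
    (h1 : ∀ b i, ‖w b i‖ = 1)
    (h2 : ∀ b (u u' : EuclideanSpace ℂ (Fin d₁)),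
      ∑ i, ⟪u, w b i⟫ * ⟪w b i, u'⟫ = (Mc : ℂ) * ⟪u, u'⟫)
    (h3 : ∀ b b', b ≠ b' → ∀ i j, ⟪w b i, w b' j⟫ * ⟪w b' j, w b i⟫ = ((d₁ : ℂ))⁻¹) :
    m ≤ d₁ + 1 := by
  classical
  have hd₁0 : (d₁ : ℂ) ≠ 0 := by
    exact_mod_cast Nat.cast_ne_zero.mpr (by omega : d₁ ≠ 0)
  have hwself : ∀ b i, ⟪w b i, w b i⟫ = (1 : ℂ) := by
    intro b i
    rw [inner_self_eq_norm_sq_to_K, h1]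
    norm_num
  -- the traceless parts
  set A : Fin m → Fin N → EuclideanSpace ℂ (Fin d₁ × Fin d₁) :=
    fun b i => outerE d₁ (w b i) - (d₁ : ℂ)⁻¹ • idE d₁ with hA
  have houter_inner : ∀ b b', b ≠ b' → ∀ i j,
      ⟪outerE d₁ (w b i), outerE d₁ (w b' j)⟫ = ((d₁ : ℂ))⁻¹ := by
    intro b b' hbb i j
    rw [inner_outerE]
    exact h3 b b' hbb i j
  have hIdA : ∀ b i, ⟪idE d₁, A b i⟫ = 0 := by
    intro b i
    rw [hA]
    rw [inner_sub_right, inner_smul_right, inner_idE_outerE, inner_idE_idE, hwself]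
    field_simp
    simp
  have hAA : ∀ b b', b ≠ b' → ∀ i j, ⟪A b i, A b' j⟫ = 0 := by
    intro b b' hbb i j
    rw [hA]
    rw [inner_sub_left, inner_sub_right, inner_sub_right, inner_smul_left,
      inner_smul_right, inner_smul_left, inner_smul_right,
      houter_inner b b' hbb i j, inner_idE_outerE, inner_outerE_idE,
      inner_idE_idE, hwself, hwself]
    simp only [map_inv₀, map_natCast]
    field_simp
    simp
  -- the spans
  set U : Fin m → Submodule ℂ (EuclideanSpace ℂ (Fin d₁ × Fin d₁)) :=
    fun b => Submodule.span ℂ (Set.range (A b)) with hU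
  have hIdU : ∀ b, ∀ y ∈ U b, ⟪idE d₁, y⟫ = 0 := by
    intro b y hy
    have hle : U b ≤ LinearMap.ker (innerSL ℂ (idE d₁) : _ →ₗ[ℂ] ℂ) :=
      Submodule.span_le.mpr (by
        rintro _ ⟨i, rfl⟩
        simpa [LinearMap.mem_ker] using hIdA b i)
    simpa [LinearMap.mem_ker] using hle hy
  have hUorth : ∀ b b', b ≠ b' → ∀ x ∈ U b, ∀ y ∈ U b', ⟪x, y⟫ = 0 := by
    intro b b' hbb
    refine span_inner_eq_zero ?_
    rintro _ ⟨i, rfl⟩ _ ⟨j, rfl⟩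
    exact hAA b b' hbb i j
  -- the identity is in the span of the outer products
  set X : Fin m → Submodule ℂ (EuclideanSpace ℂ (Fin d₁ × Fin d₁)) :=
    fun b => Submodule.span ℂ (Set.range fun i => outerE d₁ (w b i)) with hX
  have hsum : ∀ b, ∑ i, outerE d₁ (w b i) = (Mc : ℂ) • idE d₁ := by
    intro b
    refine (WithLp.linearEquiv 2 ℂ _).injective ?_
    rw [map_sum, map_smul]
    funext p
    rw [Finset.sum_apply]
    have hl : ∀ i, (WithLp.linearEquiv 2 ℂ _) (outerE d₁ (w b i)) p
        = w b i p.1 * (starRingEnd ℂ) (w b i p.2) := fun i => rfl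
    have hr : ((Mc : ℂ) • (WithLp.linearEquiv 2 ℂ _) (idE d₁)) p
        = (Mc : ℂ) * (if p.1 = p.2 then 1 else 0) := by
      simp [idE, Pi.smul_apply]
    rw [Finset.sum_congr rfl fun i _ => hl i, hr]
    have := h2 b (EuclideanSpace.single p.1 (1 : ℂ)) (EuclideanSpace.single p.2 (1 : ℂ))
    simp only [EuclideanSpace.inner_single_left, EuclideanSpace.inner_single_right,
      map_one, one_mul, mul_one, EuclideanSpace.single_apply] at this
    rw [this]
    congr 1
    by_cases hpq : p.1 = p.2 <;> simp [hpq, eq_comm]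
  have hIdX : ∀ b, idE d₁ ∈ X b := by
    intro b
    have hmem : ((Mc : ℂ) • idE d₁) ∈ X b := by
      rw [← hsum b]
      exact Submodule.sum_mem _ fun i _ => Submodule.subset_span ⟨i, rfl⟩
    have := Submodule.smul_mem (X b) ((Mc : ℂ))⁻¹ hmem
    rwa [inv_smul_smul₀ hMc] at this
  -- dimension of X is at least d₁
  have hXdim : ∀ b, d₁ ≤ Module.finrank ℂ (X b) := by
    intro b
    by_contra hcon
    push_neg at hcon
    obtain ⟨t, hts, hspan, hli⟩ :=
      exists_linearIndependent ℂ (Set.range fun i => outerE d₁ (w b i))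
    have htfin : t.Finite := hli.setFinite
    haveI := htfin.fintype
    have hcard : t.toFinset.card = Module.finrank ℂ (X b) := by
      rw [← finrank_span_set_eq_card hli, hspan]
    have hsel : ∀ a : t, ∃ i, outerE d₁ (w b i) = (a : EuclideanSpace ℂ (Fin d₁ × Fin d₁)) :=
      fun a => hts a.2
    choose idx hidx using hsel
    set Z : Submodule ℂ (EuclideanSpace ℂ (Fin d₁)) :=
      Submodule.span ℂ (Set.range fun a : t => w b (idx a)) with hZ
    have hZdim : Module.finrank ℂ Z ≤ t.toFinset.card := by
      have := finrank_range_le_card (R := ℂ) (fun a : t => w b (idx a))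
      rw [Set.finrank] at this
      simpa [Set.toFinset_card] using this
    have hZne : Z ≠ ⊤ := by
      intro htop
      have : Module.finrank ℂ Z = d₁ := by
        rw [htop, finrank_top, finrank_euclideanSpace, Fintype.card_fin]
      omega
    have hZorth : Zᗮ ≠ ⊥ := fun hbot => hZne (Submodule.orthogonal_eq_bot_iff.mp hbot)
    obtain ⟨x, hxZ, hx0⟩ := Submodule.exists_mem_ne_zero_of_ne_bot hZorth
    have hxt : ∀ a ∈ t, ⟪outerE d₁ x, a⟫ = 0 := by
      intro a ha
      rw [← show outerE d₁ (w b (idx ⟨a, ha⟩)) = a from hidx ⟨a, ha⟩, inner_outerE]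
      have hz : ⟪w b (idx ⟨a, ha⟩), x⟫ = 0 :=
        Submodule.inner_right_of_mem_orthogonal
          (Submodule.subset_span (Set.mem_range_self (⟨a, ha⟩ : t))) hxZ
      rw [hz, mul_zero]
    have hIdker : ⟪outerE d₁ x, idE d₁⟫ = 0 := by
      have hle : X b ≤ LinearMap.ker (innerSL ℂ (outerE d₁ x) : _ →ₗ[ℂ] ℂ) := by
        show Submodule.span ℂ (Set.range fun i => outerE d₁ (w b i)) ≤ _
        rw [← hspan]
        exact Submodule.span_le.mpr fun a ha => by
          simpa [LinearMap.mem_ker] using hxt a ha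
      simpa [LinearMap.mem_ker] using hle (hIdX b)
    rw [inner_outerE_idE] at hIdker
    exact hx0 (inner_self_eq_zero.mp hIdker)
  -- dimension of U is at least d₁ - 1
  have hUdim : ∀ b, d₁ - 1 ≤ Module.finrank ℂ (U b) := by
    intro b
    have hIdne : idE d₁ ≠ 0 := by
      intro h0
      have := inner_idE_idE (d₁ := d₁)
      rw [h0, inner_zero_left] at this
      exact hd₁0 this.symm
    have hXle : X b ≤ U b ⊔ Submodule.span ℂ {idE d₁} := by
      refine Submodule.span_le.mpr ?_
      rintro _ ⟨i, rfl⟩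
      have hdec : outerE d₁ (w b i) = A b i + (d₁ : ℂ)⁻¹ • idE d₁ := by
        rw [hA]
        exact (sub_add_cancel _ _).symm
      show outerE d₁ (w b i) ∈ (U b ⊔ Submodule.span ℂ {idE d₁} : Submodule ℂ _)
      rw [hdec]
      exact Submodule.add_mem _
        (Submodule.mem_sup_left (Submodule.subset_span ⟨i, rfl⟩))
        (Submodule.mem_sup_right
          (Submodule.smul_mem _ _ (Submodule.mem_span_singleton_self _)))
    have h1' : Module.finrank ℂ (X b) ≤ Module.finrank ℂ (U b ⊔ Submodule.span ℂ {idE d₁} : Submodule ℂ _) :=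
      Submodule.finrank_mono hXle
    have h2' : Module.finrank ℂ (U b ⊔ Submodule.span ℂ {idE d₁} : Submodule ℂ _)
        ≤ Module.finrank ℂ (U b) + Module.finrank ℂ (Submodule.span ℂ {idE d₁}) := by
      have := Submodule.finrank_sup_add_finrank_inf_eq (U b) (Submodule.span ℂ {idE d₁})
      omega
    have h3' : Module.finrank ℂ (Submodule.span ℂ ({idE d₁} : Set _)) = 1 :=
      finrank_span_singleton hIdne
    have := hXdim b
    omega
  -- assemble an orthonormal family
  set nb : Fin m → ℕ := fun b => Module.finrank ℂ (U b) with hnb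
  set ob : (b : Fin m) → OrthonormalBasis (Fin (nb b)) ℂ (U b) :=
    fun b => stdOrthonormalBasis ℂ (U b) with hob
  have hIdnorm : ‖idE d₁‖ ≠ 0 := by
    rw [norm_ne_zero_iff]
    intro h0
    have := inner_idE_idE (d₁ := d₁)
    rw [h0, inner_zero_left] at this
    exact hd₁0 this.symm
  set c : ℂ := ((‖idE d₁‖ : ℝ) : ℂ)⁻¹ with hc
  set fam : Option ((b : Fin m) × Fin (nb b)) → EuclideanSpace ℂ (Fin d₁ × Fin d₁) :=
    fun o => Option.rec (c • idE d₁) (fun s => (ob s.1 s.2 : EuclideanSpace ℂ (Fin d₁ × Fin d₁))) o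
    with hfam
  have horth : Orthonormal ℂ fam := by
    constructor
    · intro i
      match i with
      | none =>
          show ‖c • idE d₁‖ = 1
          rw [norm_smul, hc]
          simp [norm_inv, hIdnorm]
      | some s =>
          show ‖((ob s.1 s.2 : U s.1) : EuclideanSpace ℂ (Fin d₁ × Fin d₁))‖ = 1
          rw [Submodule.norm_coe]
          exact (ob s.1).orthonormal.1 s.2
    · intro i j hij
      match i, j with
      | none, none => exact absurd rfl hij
      | none, some s =>
          show ⟪c • idE d₁, ((ob s.1 s.2 : U s.1) : EuclideanSpace ℂ (Fin d₁ × Fin d₁))⟫ = 0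
          rw [inner_smul_left, hIdU s.1 _ (SetLike.coe_mem _), mul_zero]
      | some s, none =>
          show ⟪((ob s.1 s.2 : U s.1) : EuclideanSpace ℂ (Fin d₁ × Fin d₁)), c • idE d₁⟫ = 0
          rw [inner_smul_right, ← inner_conj_symm, hIdU s.1 _ (SetLike.coe_mem _),
            map_zero, mul_zero]
      | some s, some s' =>
          show ⟪((ob s.1 s.2 : U s.1) : EuclideanSpace ℂ (Fin d₁ × Fin d₁)),
            ((ob s'.1 s'.2 : U s'.1) : EuclideanSpace ℂ (Fin d₁ × Fin d₁))⟫ = 0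
          by_cases hbb : s.1 = s'.1
          · obtain ⟨b, k⟩ := s
            obtain ⟨b', k'⟩ := s'
            cases hbb
            have hkk : k ≠ k' := by
              intro h
              exact hij (by rw [h])
            rw [← Submodule.coe_inner]
            exact (ob b).orthonormal.2 hkk
          · exact hUorth s.1 s'.1 hbb _ (SetLike.coe_mem _) _ (SetLike.coe_mem _)
  have hli := horth.linearIndependent
  have hcardle := hli.fintype_card_le_finrank
  rw [finrank_euclideanSpace, Fintype.card_prod, Fintype.card_fin] at hcardle
  have hcardeq : Fintype.card (Option ((b : Fin m) × Fin (nb b)))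
      = (∑ b, nb b) + 1 := by
    rw [Fintype.card_option, Fintype.card_sigma]
    simp
  rw [hcardeq] at hcardle
  have hsumge : m * (d₁ - 1) ≤ ∑ b, nb b := by
    calc m * (d₁ - 1) = (Finset.univ : Finset (Fin m)).card * (d₁ - 1) := by
          rw [Finset.card_univ, Fintype.card_fin]
      _ ≤ ∑ b, nb b := by
          rw [← smul_eq_mul]
          exact Finset.card_nsmul_le_sum _ _ _ fun b _ => hUdim b
  -- arithmetic
  set e : ℕ := d₁ - 1 with he
  have hd₁e : d₁ = e + 1 := by omega
  have hfin : m * e + 1 ≤ (e + 1) * (e + 1) := by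
    calc m * e + 1 ≤ (∑ b, nb b) + 1 := by omega
      _ ≤ d₁ * d₁ := hcardle
      _ = (e + 1) * (e + 1) := by rw [hd₁e]
  have hme : m * e ≤ (e + 2) * e := by nlinarith
  have hepos : 0 < e := by omega
  have := Nat.le_of_mul_le_mul_right hme hepos
  omega

set_option maxHeartbeats 1000000

/-- If `d = d₁d₂⋯d_n` with `d₁ = 2` or `d₁ = 3` and `d₁ ≤ d_r` for all `r`, then any
collection of pairwise mutually unbiased orthonormal product bases of
`ℂ^{d₁} ⊗ ⋯ ⊗ ℂ^{d_n}` contains at most `d₁ + 1` bases. -/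
theorem MU_product_bases_upper_bound {n : ℕ} {D : Fin (n + 1) → ℕ}
    (hD : ∀ r, 2 ≤ D r) (hd₁ : D 0 = 2 ∨ D 0 = 3) (hle : ∀ r, D 0 ≤ D r)
    {m : ℕ}
    (ψ : Fin m → Fin (∏ r, D r) → (r : Fin (n + 1)) → EuclideanSpace ℂ (Fin (D r)))
    (hψ : ∀ b i r, ‖ψ b i r‖ = 1)
    (hON : ∀ b, Orthonormal ℂ (fun i => eprodPi (ψ b i)))
    (hMU : ∀ b b', b ≠ b' → ∀ i j,
      ‖⟪eprodPi (ψ b i), eprodPi (ψ b' j)⟫‖ ^ 2 = 1 / ((∏ r, D r : ℕ) : ℝ)) :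
    m ≤ D 0 + 1 := by
  classical
  -- numerology
  have hprod : (∏ r, D r) = D 0 * ∏ r : Fin n, D r.succ := Fin.prod_univ_succ D
  have hdNpos : 0 < ∏ r, D r :=
    Finset.prod_pos fun r _ => by have := hD r; omega
  have hMnpos : 0 < ∏ r : Fin n, D r.succ :=
    Finset.prod_pos fun r _ => by have := hD r.succ; omega
  have hD0pos : 0 < D 0 := by have := hD 0; omega
  -- head and tail vectors
  set v : Fin m → Fin (∏ r, D r) → EuclideanSpace ℂ (Fin (D 0)) :=
    fun b i => ψ b i 0 with hv
  set Vt : Fin m → Fin (∏ r, D r) → EuclideanSpace ℂ ((r : Fin n) → Fin (D r.succ)) :=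
    fun b i => eprodPi (fun r : Fin n => ψ b i r.succ) with hVt
  have hsplit : ∀ b i, eprodPi (ψ b i) = tensorHT (v b i) (Vt b i) :=
    fun b i => eprodPi_succ (ψ b i)
  have hv1 : ∀ b i, ⟪v b i, v b i⟫ = (1 : ℂ) := by
    intro b i
    rw [inner_self_eq_norm_sq_to_K]
    rw [hv]
    rw [hψ b i 0]
    norm_num
  have hVt1 : ∀ b i, ⟪Vt b i, Vt b i⟫ = (1 : ℂ) := by
    intro b i
    rw [hVt]
    rw [inner_eprodPi]
    refine Finset.prod_eq_one fun r _ => ?_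
    rw [inner_self_eq_norm_sq_to_K, hψ b i r.succ]
    norm_num
  -- the orthonormal bases
  haveI : Nonempty (Fin (∏ r, D r)) := ⟨⟨0, hdNpos⟩⟩
  have hcard : Fintype.card (Fin (∏ r, D r))
      = Module.finrank ℂ (EuclideanSpace ℂ ((r : Fin (n + 1)) → Fin (D r))) := by
    rw [finrank_euclideanSpace, Fintype.card_fin, Fintype.card_pi]
    simp
  have hONB : ∀ b, ∃ B : OrthonormalBasis (Fin (∏ r, D r)) ℂ
      (EuclideanSpace ℂ ((r : Fin (n + 1)) → Fin (D r))),
      ∀ j, B j = eprodPi (ψ b j) := by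
    intro b
    have hli := (hON b).linearIndependent
    have hspan : ⊤ ≤ Submodule.span ℂ (Set.range fun i => eprodPi (ψ b i)) := by
      rw [← coe_basisOfLinearIndependentOfCardEqFinrank hli hcard]
      exact (basisOfLinearIndependentOfCardEqFinrank hli hcard).span_eq.ge
    exact ⟨OrthonormalBasis.mk (hON b) hspan, fun j => by
      simp [OrthonormalBasis.coe_mk]⟩
  choose B hB using hONB
  have hpars : ∀ b (x y : EuclideanSpace ℂ ((r : Fin (n + 1)) → Fin (D r))),
      ∑ j, ⟪x, eprodPi (ψ b j)⟫ * ⟪eprodPi (ψ b j), y⟫ = ⟪x, y⟫ := by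
    intro b x y
    have h := (B b).sum_inner_mul_inner x y
    simp only [hB] at h
    exact h
  -- identity A : the heads of each basis form a tight frame
  have idA : ∀ b (u u' : EuclideanSpace ℂ (Fin (D 0))),
      ∑ i, ⟪u, v b i⟫ * ⟪v b i, u'⟫
        = ((∏ r : Fin n, D r.succ : ℕ) : ℂ) * ⟪u, u'⟫ := by
    intro b u u'
    have hVtg : ∀ i, ∑ g, (starRingEnd ℂ) (Vt b i g) * Vt b i g = 1 := by
      intro i
      have h := hVt1 b i
      rw [PiLp.inner_apply] at h
      simpa only [RCLike.inner_apply'] using h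
    have key : ∀ g : (r : Fin n) → Fin (D r.succ),
        ∑ i, (⟪u, v b i⟫ * Vt b i g) * (⟪v b i, u'⟫ * (starRingEnd ℂ) (Vt b i g))
          = ⟪u, u'⟫ := by
      intro g
      have h := hpars b (tensorHT u (EuclideanSpace.single g 1))
        (tensorHT u' (EuclideanSpace.single g 1))
      simp only [hsplit, inner_tensorHT, EuclideanSpace.inner_single_left,
        EuclideanSpace.inner_single_right, map_one, one_mul, mul_one,
        EuclideanSpace.single_apply, if_pos] at h
      exact h
    calc ∑ i, ⟪u, v b i⟫ * ⟪v b i, u'⟫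
        = ∑ i, ∑ g, (⟪u, v b i⟫ * Vt b i g) *
            (⟪v b i, u'⟫ * (starRingEnd ℂ) (Vt b i g)) := by
          refine Finset.sum_congr rfl fun i _ => ?_
          rw [show ∑ g, (⟪u, v b i⟫ * Vt b i g) * (⟪v b i, u'⟫ * (starRingEnd ℂ) (Vt b i g))
              = (⟪u, v b i⟫ * ⟪v b i, u'⟫) * ∑ g, (starRingEnd ℂ) (Vt b i g) * Vt b i g by
            rw [Finset.mul_sum]
            exact Finset.sum_congr rfl fun g _ => by ring]
          rw [hVtg i, mul_one]
      _ = ∑ g, ∑ i, (⟪u, v b i⟫ * Vt b i g) *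
            (⟪v b i, u'⟫ * (starRingEnd ℂ) (Vt b i g)) := Finset.sum_comm
      _ = ∑ _g : ((r : Fin n) → Fin (D r.succ)), ⟪u, u'⟫ :=
          Finset.sum_congr rfl fun g _ => key g
      _ = ((∏ r : Fin n, D r.succ : ℕ) : ℂ) * ⟪u, u'⟫ := by
          rw [Finset.sum_const, Finset.card_univ, nsmul_eq_mul]
          congr 2
          rw [Fintype.card_pi]
          simp
  -- identity B : tails of each basis, paired against a fixed unit tail
  have idB : ∀ b i b', ∑ j, ⟪Vt b i, Vt b' j⟫ * ⟪Vt b' j, Vt b i⟫ = ((D 0 : ℕ) : ℂ) := by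
    intro b i b'
    have hvk : ∀ j, ∑ k, (starRingEnd ℂ) (v b' j k) * v b' j k = 1 := by
      intro j
      have h := hv1 b' j
      rw [PiLp.inner_apply] at h
      simpa only [RCLike.inner_apply'] using h
    have key : ∀ k : Fin (D 0),
        ∑ j, (v b' j k * ⟪Vt b i, Vt b' j⟫) *
            ((starRingEnd ℂ) (v b' j k) * ⟪Vt b' j, Vt b i⟫) = 1 := by
      intro k
      have h := hpars b' (tensorHT (EuclideanSpace.single k 1) (Vt b i))
        (tensorHT (EuclideanSpace.single k 1) (Vt b i))
      simp only [hsplit, inner_tensorHT, EuclideanSpace.inner_single_left,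
        EuclideanSpace.inner_single_right, map_one, one_mul, mul_one,
        EuclideanSpace.single_apply, if_pos, hVt1 b i] at h
      exact h
    calc ∑ j, ⟪Vt b i, Vt b' j⟫ * ⟪Vt b' j, Vt b i⟫
        = ∑ j, ∑ k, (v b' j k * ⟪Vt b i, Vt b' j⟫) *
            ((starRingEnd ℂ) (v b' j k) * ⟪Vt b' j, Vt b i⟫) := by
          refine Finset.sum_congr rfl fun j _ => ?_
          rw [show ∑ k, (v b' j k * ⟪Vt b i, Vt b' j⟫) *
              ((starRingEnd ℂ) (v b' j k) * ⟪Vt b' j, Vt b i⟫)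
              = (⟪Vt b i, Vt b' j⟫ * ⟪Vt b' j, Vt b i⟫) *
                ∑ k, (starRingEnd ℂ) (v b' j k) * v b' j k by
            rw [Finset.mul_sum]
            exact Finset.sum_congr rfl fun k _ => by ring]
          rw [hvk j, mul_one]
      _ = ∑ k, ∑ j, (v b' j k * ⟪Vt b i, Vt b' j⟫) *
            ((starRingEnd ℂ) (v b' j k) * ⟪Vt b' j, Vt b i⟫) := Finset.sum_comm
      _ = ∑ _k : Fin (D 0), (1 : ℂ) := Finset.sum_congr rfl fun k _ => key k
      _ = ((D 0 : ℕ) : ℂ) := by simp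
  -- unbiasedness of heads across distinct bases
  have unb : ∀ b b', b ≠ b' → ∀ i j,
      ⟪v b i, v b' j⟫ * ⟪v b' j, v b i⟫ = ((D 0 : ℂ))⁻¹ := by
    intro b b' hbb i j₀
    set t : Fin (∏ r, D r) → ℝ := fun j => ‖⟪v b i, v b' j⟫‖ ^ 2 with hT
    set q : Fin (∏ r, D r) → ℝ := fun j => ‖⟪Vt b i, Vt b' j⟫‖ ^ 2 with hQ
    have htq : ∀ j, t j * q j = (((∏ r, D r : ℕ) : ℝ))⁻¹ := by
      intro j
      have h := hMU b b' hbb i j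
      rw [hsplit, hsplit, inner_tensorHT, norm_mul, mul_pow] at h
      rw [hT, hQ]
      rw [h, one_div]
    have hconj : ∀ (x y : EuclideanSpace ℂ (Fin (D 0))),
        ⟪x, y⟫ * ⟪y, x⟫ = ((‖⟪x, y⟫‖ ^ 2 : ℝ) : ℂ) := by
      intro x y
      rw [show ⟪y, x⟫ = (starRingEnd ℂ) ⟪x, y⟫ from (inner_conj_symm y x).symm,
        RCLike.mul_conj]
      norm_cast
    have hconjVt : ∀ (x y : EuclideanSpace ℂ ((r : Fin n) → Fin (D r.succ))),
        ⟪x, y⟫ * ⟪y, x⟫ = ((‖⟪x, y⟫‖ ^ 2 : ℝ) : ℂ) := by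
      intro x y
      rw [show ⟪y, x⟫ = (starRingEnd ℂ) ⟪x, y⟫ from (inner_conj_symm y x).symm,
        RCLike.mul_conj]
      norm_cast
    have hsumt : ∑ j, t j = ((∏ r : Fin n, D r.succ : ℕ) : ℝ) := by
      have h := idA b' (v b i) (v b i)
      rw [hv1 b i, mul_one] at h
      rw [Finset.sum_congr rfl fun j _ => hconj (v b i) (v b' j)] at h
      rw [← Complex.ofReal_sum] at h
      exact_mod_cast h
    have hsumq : ∑ j, q j = ((D 0 : ℕ) : ℝ) := by
      have h := idB b i b'
      rw [Finset.sum_congr rfl fun j _ => hconjVt (Vt b i) (Vt b' j)] at h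
      rw [← Complex.ofReal_sum] at h
      exact_mod_cast h
    have hdNR : (0 : ℝ) < ((∏ r, D r : ℕ) : ℝ) := by exact_mod_cast hdNpos
    have htpos : ∀ j, 0 < t j := by
      intro j
      rcases (sq_nonneg ‖⟪v b i, v b' j⟫‖).lt_or_eq with h | h
      · exact h
      · exfalso
        have h0 : t j = 0 := h.symm
        have h1 := htq j
        rw [h0, zero_mul] at h1
        have h2 : (((∏ r, D r : ℕ) : ℝ))⁻¹ = 0 := h1.symm
        rw [inv_eq_zero] at h2
        exact hdNR.ne' h2
    set c : ℝ := ((D 0 : ℕ) : ℝ)⁻¹ with hcdef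
    have hD0R : (0 : ℝ) < ((D 0 : ℕ) : ℝ) := by exact_mod_cast hD0pos
    have hexp : ∀ j, (t j - c) ^ 2 / t j
        = t j - 2 * c + c ^ 2 * (((∏ r, D r : ℕ) : ℝ) * q j) := by
      intro j
      have ht0 := (htpos j).ne'
      have h2 : ((∏ r, D r : ℕ) : ℝ) * q j = (t j)⁻¹ := by
        rw [inv_eq_one_div, eq_div_iff ht0]
        calc ((∏ r, D r : ℕ) : ℝ) * q j * t j
            = t j * q j * ((∏ r, D r : ℕ) : ℝ) := by ring
          _ = (((∏ r, D r : ℕ) : ℝ))⁻¹ * ((∏ r, D r : ℕ) : ℝ) := by rw [htq j]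
          _ = 1 := inv_mul_cancel₀ hdNR.ne'
      rw [h2, div_eq_iff ht0]
      have hx : (t j - 2 * c + c ^ 2 * (t j)⁻¹) * t j
          = t j * t j - 2 * c * t j + c ^ 2 * ((t j)⁻¹ * t j) := by ring
      rw [hx, inv_mul_cancel₀ ht0]
      ring
    have hzero : ∑ j, (t j - c) ^ 2 / t j = 0 := by
      rw [Finset.sum_congr rfl fun j _ => hexp j]
      rw [Finset.sum_add_distrib, Finset.sum_sub_distrib, hsumt, Finset.sum_const,
        Finset.card_univ, Fintype.card_fin, nsmul_eq_mul]
      rw [show ∑ j, c ^ 2 * (((∏ r, D r : ℕ) : ℝ) * q j)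
          = c ^ 2 * ((∏ r, D r : ℕ) : ℝ) * ∑ j, q j by
        rw [Finset.mul_sum]
        exact Finset.sum_congr rfl fun j _ => by ring]
      rw [hsumq]
      have hcast : ((∏ r, D r : ℕ) : ℝ)
          = ((D 0 : ℕ) : ℝ) * ((∏ r : Fin n, D r.succ : ℕ) : ℝ) := by
        rw [← Nat.cast_mul, ← hprod]
      rw [hcast, hcdef]
      field_simp
      ring
    have hterm : (t j₀ - c) ^ 2 / t j₀ = 0 := by
      exact (Finset.sum_eq_zero_iff_of_nonneg
        (fun j _ => div_nonneg (sq_nonneg _) (htpos j).le)).mp hzero j₀ (Finset.mem_univ j₀)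
    have htj : t j₀ = c := by
      rcases div_eq_zero_iff.mp hterm with h | h
      · have := sq_eq_zero_iff.mp h
        linarith [sub_eq_zero.mp this]
      · exact absurd h (htpos j₀).ne'
    rw [hconj (v b i) (v b' j₀)]
    rw [show ‖⟪v b i, v b' j₀⟫‖ ^ 2 = t j₀ from rfl, htj, hcdef]
    push_cast
    simp
  -- conclude via the counting lemma
  have hMc0 : ((∏ r : Fin n, D r.succ : ℕ) : ℂ) ≠ 0 := by
    exact_mod_cast Nat.cast_ne_zero.mpr hMnpos.ne'
  exact count_lemma (hD 0) hMc0 v (fun b i => hψ b i 0) idA unb
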